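/- arXiv:2205.11233 — 2 statements merged into one kernel-verified Lean document; each statement's English description precedes it below -/
import Mathlib

section
/- Let n ∈ ℕ, c > 0, and let u, v ∈ ℝⁿ satisfy c‖u‖² < 1 and c‖v‖² < 1. Then the rescaled Poincaré distance dominates the Euclidean distance between the images under the logarithmic map at the origin: ‖log₀(u) − log₀(v)‖ ≤ d(u, v) = (1/√c)·artanh(√c·‖(−u) ⊕_c v‖). -/
open Real
open scoped Classical

/-- Real inverse hyperbolic tangent. -/
noncomputable def artanh (x : ℝ) : ℝ := (1 / 2) * Real.log ((1 + x) / (1 - x))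

/-- Möbius addition on the Poincaré ball of curvature `c`. -/
noncomputable def mobiusAdd {n : ℕ} (c : ℝ) (u v : EuclideanSpace ℝ (Fin n)) :
    EuclideanSpace ℝ (Fin n) :=
  (1 + 2 * c * (inner ℝ u v : ℝ) + c ^ 2 * ‖u‖ ^ 2 * ‖v‖ ^ 2)⁻¹ •
    ((1 + 2 * c * (inner ℝ u v : ℝ) + c * ‖v‖ ^ 2) • u + (1 - c * ‖u‖ ^ 2) • v)

/-- Logarithmic map at the origin of the Poincaré ball of curvature `c`. -/
noncomputable def plog {n : ℕ} (c : ℝ) (v : EuclideanSpace ℝ (Fin n)) :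
    EuclideanSpace ℝ (Fin n) :=
  if v = 0 then 0 else (_root_.artanh (Real.sqrt c * ‖v‖) / (Real.sqrt c * ‖v‖)) • v

/-- Exponential map at the origin of the Poincaré ball of curvature `c`. -/
noncomputable def pexp {n : ℕ} (c : ℝ) (x : EuclideanSpace ℝ (Fin n)) :
    EuclideanSpace ℝ (Fin n) :=
  if x = 0 then 0 else (Real.tanh (Real.sqrt c * ‖x‖) / (Real.sqrt c * ‖x‖)) • x

/-- The (rescaled) Poincaré distance of curvature `c`. -/
noncomputable def pdist {n : ℕ} (c : ℝ) (u v : EuclideanSpace ℝ (Fin n)) : ℝ :=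
  (1 / Real.sqrt c) * _root_.artanh (Real.sqrt c * ‖mobiusAdd c (-u) v‖)

/- ### Auxiliary lemmas -/

lemma sinh_ratio_mono {a b : ℝ} (ha : 0 ≤ a) (hab : a ≤ b) :
    Real.sinh a * b ≤ a * Real.sinh b := by
  rcases eq_or_lt_of_le (ha.trans hab) with hb | hb
  · have : a = 0 := le_antisymm (hab.trans hb.symm.le) ha
    simp [this, ← hb]
  · have hconv : ConvexOn ℝ (Set.Ici (0:ℝ)) Real.sinh := by
      apply MonotoneOn.convexOn_of_deriv (convex_Ici 0)
        Real.continuous_sinh.continuousOn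
        (Real.differentiable_sinh.differentiableOn)
      intro x hx y hy hxy
      rw [Real.deriv_sinh]
      rw [interior_Ici] at hx hy
      exact Real.cosh_le_cosh.2 (by
        rw [abs_of_nonneg hx.le, abs_of_nonneg hy.le]; exact hxy)
    have h := hconv.2 (Set.mem_Ici.2 (le_refl 0)) (Set.mem_Ici.2 (ha.trans hab))
      (show (0:ℝ) ≤ 1 - a/b by
        have : a / b ≤ 1 := (div_le_one hb).2 hab
        linarith)
      (show (0:ℝ) ≤ a/b by positivity)
      (by ring)
    simp only [smul_eq_mul, mul_zero, zero_add, Real.sinh_zero] at h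
    have h' : Real.sinh a ≤ a / b * Real.sinh b := by
      have hab' : a / b * b = a := by field_simp
      rw [hab'] at h
      linarith
    calc Real.sinh a * b ≤ (a / b * Real.sinh b) * b :=
          mul_le_mul_of_nonneg_right h' (ha.trans hab)
      _ = a * Real.sinh b := by field_simp

lemma cosh_law_aux (s r m e : ℝ) (hr : 0 ≤ r) (hrs : r ≤ s)
    (hm1 : -1 ≤ m) (hm2 : m ≤ 1) (he : 0 ≤ e)
    (h : e ^ 2 = s ^ 2 + r ^ 2 - 2 * s * r * m) :
    Real.cosh e ≤ Real.cosh s * Real.cosh r - Real.sinh s * Real.sinh r * m := by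
  have hs : 0 ≤ s := hr.trans hrs
  rcases eq_or_lt_of_le hr with hr0 | hr0
  · have he2 : e ^ 2 = s ^ 2 := by rw [h, ← hr0]; ring
    have : e = s := by nlinarith
    simp [this, ← hr0]
  · have hs0 : 0 < s := lt_of_lt_of_le hr0 hrs
    set δ := s - r with hδ
    have hδ0 : 0 ≤ δ := by simp [hδ]; linarith
    have hsr1 : 0 ≤ s * r * (1 + m) := mul_nonneg (mul_nonneg hs hr) (by linarith)
    have hsr2 : 0 ≤ s * r * (1 - m) := mul_nonneg (mul_nonneg hs hr) (by linarith)
    have he2le : e ^ 2 ≤ (s + r) ^ 2 := by nlinarith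
    have hd2le : δ ^ 2 ≤ e ^ 2 := by rw [hδ]; nlinarith
    have hele : e ≤ s + r := by
      have h' := Real.sqrt_le_sqrt he2le
      rwa [Real.sqrt_sq he, Real.sqrt_sq (by linarith)] at h'
    have hdle : δ ≤ e := by
      have h' := Real.sqrt_le_sqrt hd2le
      rwa [Real.sqrt_sq hδ0, Real.sqrt_sq he] at h'
    set A := (e + δ) / 2 with hA
    set B := (e - δ) / 2 with hB
    have hA0 : 0 ≤ A := by simp [hA]; linarith
    have hB0 : 0 ≤ B := by simp [hB]; linarith
    have hAs : A ≤ s := by simp [hA, hδ]; linarith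
    have hBr : B ≤ r := by simp [hB, hδ]; linarith
    have hcd : Real.cosh e - Real.cosh δ = 2 * Real.sinh A * Real.sinh B := by
      have he' : e = A + B := by simp [hA, hB]; ring
      have hd' : δ = A - B := by simp [hA, hB]; ring
      rw [he', hd', Real.cosh_add, Real.cosh_sub]; ring
    have hAB : 2 * (A * B) = s * r * (1 - m) := by
      have : e ^ 2 - δ ^ 2 = 2 * s * r * (1 - m) := by rw [h, hδ]; ring
      nlinarith [this]
    have h1 : Real.sinh A * s ≤ A * Real.sinh s := sinh_ratio_mono hA0 hAs
    have h2 : Real.sinh B * r ≤ B * Real.sinh r := sinh_ratio_mono hB0 hBr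
    have hsA : 0 ≤ Real.sinh A := Real.sinh_nonneg_iff.2 hA0
    have hsB : 0 ≤ Real.sinh B := Real.sinh_nonneg_iff.2 hB0
    have hss : 0 ≤ Real.sinh s := Real.sinh_nonneg_iff.2 hs
    have hsrr : 0 ≤ Real.sinh r := Real.sinh_nonneg_iff.2 hr
    have hmul : (Real.sinh A * s) * (Real.sinh B * r)
        ≤ (A * Real.sinh s) * (B * Real.sinh r) := by
      apply mul_le_mul h1 h2 (by positivity) (by positivity)
    have key : 2 * Real.sinh A * Real.sinh B ≤ Real.sinh s * Real.sinh r * (1 - m) := by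
      have hpos : 0 < s * r := by positivity
      rw [← mul_le_mul_iff_of_pos_right hpos]
      calc 2 * Real.sinh A * Real.sinh B * (s * r)
          = 2 * ((Real.sinh A * s) * (Real.sinh B * r)) := by ring
        _ ≤ 2 * ((A * Real.sinh s) * (B * Real.sinh r)) := by linarith
        _ = (2 * (A * B)) * (Real.sinh s * Real.sinh r) := by ring
        _ = Real.sinh s * Real.sinh r * (1 - m) * (s * r) := by rw [hAB]; ring
    have hcoshd : Real.cosh δ = Real.cosh s * Real.cosh r - Real.sinh s * Real.sinh r := by
      rw [hδ, Real.cosh_sub]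
    linarith

lemma cosh_law (s r m e : ℝ) (hs : 0 ≤ s) (hr : 0 ≤ r)
    (hm1 : -1 ≤ m) (hm2 : m ≤ 1) (he : 0 ≤ e)
    (h : e ^ 2 = s ^ 2 + r ^ 2 - 2 * s * r * m) :
    Real.cosh e ≤ Real.cosh s * Real.cosh r - Real.sinh s * Real.sinh r * m := by
  rcases le_total r s with hrs | hrs
  · exact cosh_law_aux s r m e hr hrs hm1 hm2 he h
  · have := cosh_law_aux r s m e hs hrs hm1 hm2 he (by rw [h]; ring)
    linarith [this]

lemma artanh_nonneg {t : ℝ} (h0 : 0 ≤ t) (h1 : t < 1) : 0 ≤ _root_.artanh t := by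
  unfold _root_.artanh
  have h : (1:ℝ) ≤ (1 + t) / (1 - t) := by
    rw [le_div_iff₀ (by linarith)]; linarith
  have := Real.log_nonneg h
  linarith

lemma exp_artanh {t : ℝ} (h1 : t < 1) (h2 : -1 < t) :
    Real.exp (_root_.artanh t) = Real.sqrt (1 + t) / Real.sqrt (1 - t) := by
  unfold _root_.artanh
  have hy : (0:ℝ) < (1 + t) / (1 - t) := by
    apply div_pos <;> linarith
  rw [show (1/2 : ℝ) * Real.log ((1 + t) / (1 - t))
      = Real.log ((1 + t) / (1 - t)) / 2 by ring,
    ← Real.log_sqrt hy.le, Real.exp_log (Real.sqrt_pos.2 hy),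
    Real.sqrt_div (by linarith : (0:ℝ) ≤ 1 + t)]

lemma cosh_sinh_artanh {t : ℝ} (h0 : 0 ≤ t) (h1 : t < 1) :
    Real.cosh (_root_.artanh t) = 1 / Real.sqrt (1 - t ^ 2) ∧
    Real.sinh (_root_.artanh t) = t / Real.sqrt (1 - t ^ 2) := by
  have h2 : (-1:ℝ) < t := by linarith
  have ha : (0:ℝ) < 1 + t := by linarith
  have hb : (0:ℝ) < 1 - t := by linarith
  have sa : (0:ℝ) < Real.sqrt (1 + t) := Real.sqrt_pos.2 ha
  have sb : (0:ℝ) < Real.sqrt (1 - t) := Real.sqrt_pos.2 hb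
  have sa2 : Real.sqrt (1 + t) ^ 2 = 1 + t := Real.sq_sqrt ha.le
  have sb2 : Real.sqrt (1 - t) ^ 2 = 1 - t := Real.sq_sqrt hb.le
  have e1 : Real.exp (_root_.artanh t) = Real.sqrt (1 + t) / Real.sqrt (1 - t) :=
    exp_artanh h1 h2
  have e2 : Real.exp (-(_root_.artanh t)) = Real.sqrt (1 - t) / Real.sqrt (1 + t) := by
    rw [Real.exp_neg, e1]
    field_simp
  have hm : Real.sqrt (1 - t ^ 2) = Real.sqrt (1 - t) * Real.sqrt (1 + t) := by
    rw [← Real.sqrt_mul hb.le]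
    ring_nf
  constructor
  · rw [Real.cosh_eq, e1, e2, hm]
    field_simp
    nlinarith [sa2, sb2]
  · rw [Real.sinh_eq, e1, e2, hm]
    field_simp
    nlinarith [sa2, sb2]

lemma mobius_norm_sq {n : ℕ} (c : ℝ) (hc : 0 < c) (u v : EuclideanSpace ℝ (Fin n))
    (hu : c * ‖u‖ ^ 2 < 1) (hv : c * ‖v‖ ^ 2 < 1) :
    ‖mobiusAdd c (-u) v‖ ^ 2 *
      (1 - 2 * c * (inner ℝ u v : ℝ) + c ^ 2 * ‖u‖ ^ 2 * ‖v‖ ^ 2) = ‖u - v‖ ^ 2 := by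
  set p : ℝ := inner ℝ u v with hp
  set U := ‖u‖ ^ 2 with hU
  set V := ‖v‖ ^ 2 with hV
  have hcs : p ^ 2 ≤ U * V := by
    have := abs_real_inner_le_norm u v
    nlinarith [this, abs_nonneg p, norm_nonneg u, norm_nonneg v, sq_abs p]
  have hU0 : 0 ≤ U := sq_nonneg _
  have hV0 : 0 ≤ V := sq_nonneg _
  have hple : p ≤ ‖u‖ * ‖v‖ := real_inner_le_norm u v
  have h1 : c * (‖u‖ * ‖v‖) < 1 := by
    nlinarith [sq_nonneg (‖u‖ - ‖v‖)]
  have hD : 0 < 1 - 2 * c * p + c ^ 2 * U * V := by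
    nlinarith [sq_nonneg (1 - c * (‖u‖ * ‖v‖)),
      mul_nonneg hc.le (sub_nonneg.2 hple)]
  set D := 1 - 2 * c * p + c ^ 2 * U * V with hDdef
  have key : mobiusAdd c (-u) v =
      D⁻¹ • ((1 - 2 * c * p + c * V) • (-u) + (1 - c * U) • v) := by
    unfold mobiusAdd
    rw [inner_neg_left, norm_neg]
    norm_num [hDdef, hp, hU, hV]
    ring_nf
  rw [key]
  have hwsq : ‖(1 - 2 * c * p + c * V) • (-u) + (1 - c * U) • v‖ ^ 2
      = D * ‖u - v‖ ^ 2 := by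
    rw [norm_add_sq_real, norm_smul, norm_smul, norm_neg, norm_sub_sq_real,
      real_inner_smul_left, real_inner_smul_right, inner_neg_left]
    simp only [Real.norm_eq_abs]
    rw [mul_pow, mul_pow, sq_abs, sq_abs, ← hp, ← hU, ← hV, hDdef]
    ring
  rw [norm_smul, mul_pow, Real.norm_eq_abs, sq_abs, hwsq]
  field_simp

lemma plog_zero {n : ℕ} (c : ℝ) : plog c (0 : EuclideanSpace ℝ (Fin n)) = 0 := by
  simp [plog]

lemma lt_one_of_sq_lt_one {x : ℝ} (hx : 0 ≤ x) (h : x ^ 2 < 1) : x < 1 := by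
  have h' := Real.sqrt_lt_sqrt (sq_nonneg x) h
  rwa [Real.sqrt_sq hx, Real.sqrt_one] at h'

lemma D_pos (c p nu nv : ℝ) (hc : 0 < c) (hple : p ≤ nu * nv)
    (hu : c * nu ^ 2 < 1) (hv : c * nv ^ 2 < 1) :
    0 < 1 - 2 * c * p + c ^ 2 * nu ^ 2 * nv ^ 2 := by
  have h1 : c * (nu * nv) < 1 := by nlinarith [sq_nonneg (nu - nv)]
  nlinarith [sq_nonneg (1 - c * (nu * nv)), mul_nonneg hc.le (sub_nonneg.2 hple)]

lemma one_sub_cp_sq_le (c p nu nv : ℝ) (hc : 0 < c) (hcs : p ^ 2 ≤ nu ^ 2 * nv ^ 2) :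
    (1 - c * p) ^ 2 ≤ 1 - 2 * c * p + c ^ 2 * nu ^ 2 * nv ^ 2 := by
  nlinarith [mul_pos (mul_pos hc hc) (show (0:ℝ) < 1 by norm_num)]

-- helper: norm of plog
lemma norm_plog {n : ℕ} (c : ℝ) (hc : 0 < c) (v : EuclideanSpace ℝ (Fin n))
    (hv : c * ‖v‖ ^ 2 < 1) :
    ‖plog c v‖ = (1 / Real.sqrt c) * _root_.artanh (Real.sqrt c * ‖v‖) := by
  have hsc : 0 < Real.sqrt c := Real.sqrt_pos.2 hc
  by_cases h0 : v = 0
  · simp [plog, h0, _root_.artanh]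
  · have hvn : 0 < ‖v‖ := norm_pos_iff.2 h0
    have hY0 : 0 < Real.sqrt c * ‖v‖ := by positivity
    have hY2 : (Real.sqrt c * ‖v‖) ^ 2 = c * ‖v‖ ^ 2 := by
      rw [mul_pow, Real.sq_sqrt hc.le]
    have hY1 : Real.sqrt c * ‖v‖ < 1 :=
      lt_one_of_sq_lt_one hY0.le (by rw [hY2]; exact hv)
    have har : 0 ≤ _root_.artanh (Real.sqrt c * ‖v‖) := artanh_nonneg hY0.le hY1
    rw [plog, if_neg h0, norm_smul, Real.norm_eq_abs,
      abs_of_nonneg (div_nonneg har hY0.le)]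
    field_simp

set_option maxHeartbeats 1000000

/-- The rescaled Poincaré distance dominates the Euclidean distance between the
images under the logarithmic map at the origin. -/
theorem norm_sub_plog_le_pdist {n : ℕ} (c : ℝ) (hc : 0 < c)
    (u v : EuclideanSpace ℝ (Fin n))
    (hu : c * ‖u‖ ^ 2 < 1) (hv : c * ‖v‖ ^ 2 < 1) :
    ‖plog c u - plog c v‖ ≤ pdist c u v ∧
      pdist c u v = (1 / Real.sqrt c) * _root_.artanh (Real.sqrt c * ‖mobiusAdd c (-u) v‖) := by
  refine ⟨?_, rfl⟩
  have hsc : 0 < Real.sqrt c := Real.sqrt_pos.2 hc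
  have hsc2 : Real.sqrt c ^ 2 = c := Real.sq_sqrt hc.le
  by_cases hu0 : u = 0
  · subst hu0
    have hmz : mobiusAdd c (-(0 : EuclideanSpace ℝ (Fin n))) v = v := by
      simp [mobiusAdd]
    rw [pdist, hmz, plog_zero, zero_sub, norm_neg, norm_plog c hc v hv]
  · by_cases hv0 : v = 0
    · subst hv0
      have hmz : mobiusAdd c (-u) (0 : EuclideanSpace ℝ (Fin n)) = -u := by
        simp [mobiusAdd]
      rw [pdist, hmz, plog_zero, sub_zero, norm_neg, norm_plog c hc u hu]
    · have hun : 0 < ‖u‖ := norm_pos_iff.2 hu0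
      have hvn : 0 < ‖v‖ := norm_pos_iff.2 hv0
      set X := Real.sqrt c * ‖u‖ with hXdef
      set Y := Real.sqrt c * ‖v‖ with hYdef
      have hX0 : 0 < X := by positivity
      have hY0 : 0 < Y := by positivity
      have hX2 : X ^ 2 = c * ‖u‖ ^ 2 := by rw [hXdef, mul_pow, hsc2]
      have hY2 : Y ^ 2 = c * ‖v‖ ^ 2 := by rw [hYdef, mul_pow, hsc2]
      have hX1 : X < 1 := lt_one_of_sq_lt_one hX0.le (by rw [hX2]; exact hu)
      have hY1 : Y < 1 := lt_one_of_sq_lt_one hY0.le (by rw [hY2]; exact hv)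
      have hXY : X * Y = c * (‖u‖ * ‖v‖) := by
        rw [hXdef, hYdef, show Real.sqrt c * ‖u‖ * (Real.sqrt c * ‖v‖)
          = Real.sqrt c ^ 2 * (‖u‖ * ‖v‖) by ring, hsc2]
      set s := _root_.artanh X with hsdef
      set r := _root_.artanh Y with hrdef
      have hs0 : 0 ≤ s := artanh_nonneg hX0.le hX1
      have hr0 : 0 ≤ r := artanh_nonneg hY0.le hY1
      set p : ℝ := inner ℝ u v with hp
      set m := p / (‖u‖ * ‖v‖) with hmdef
      have hple : |p| ≤ ‖u‖ * ‖v‖ := abs_real_inner_le_norm u v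
      have hcs : p ^ 2 ≤ ‖u‖ ^ 2 * ‖v‖ ^ 2 := by
        calc p ^ 2 = |p| ^ 2 := (sq_abs p).symm
          _ ≤ (‖u‖ * ‖v‖) ^ 2 := pow_le_pow_left₀ (abs_nonneg p) hple 2
          _ = ‖u‖ ^ 2 * ‖v‖ ^ 2 := mul_pow _ _ 2
      have hmabs : |m| ≤ 1 := by
        rw [hmdef, abs_div, abs_of_pos (mul_pos hun hvn)]
        exact (div_le_one (mul_pos hun hvn)).2 hple
      obtain ⟨hm1, hm2⟩ := abs_le.1 hmabs
      -- the two log images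
      simp only [plog, if_neg hu0, if_neg hv0, ← hXdef, ← hYdef, ← hsdef, ← hrdef]
      set a := (s / X) • u with hadef
      set b := (r / Y) • v with hbdef
      clear_value X Y
      set e := Real.sqrt c * ‖a - b‖ with hedef
      have he0 : 0 ≤ e := by positivity
      have he2 : e ^ 2 = s ^ 2 + r ^ 2 - 2 * s * r * m := by
        have t1 : c * ((s/X)^2 * ‖u‖^2) = s^2 := by
          field_simp
          linear_combination (-(s^2)) * hX2
        have t3 : c * ((r/Y)^2 * ‖v‖^2) = r^2 := by
          field_simp
          linear_combination (-(r^2)) * hY2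
        have t2 : c * ((s/X) * ((r/Y) * p)) = s*r*m := by
          rw [hmdef]
          field_simp
          linear_combination (-(s*r*p))*hXY
        rw [hedef, mul_pow, hsc2, hadef, hbdef, norm_sub_sq_real,
          real_inner_smul_left, real_inner_smul_right, norm_smul, norm_smul]
        simp only [Real.norm_eq_abs]
        rw [mul_pow, mul_pow, sq_abs, sq_abs, ← hp]
        linear_combination t1 + t3 - 2*t2
      clear_value s r p m a b e
      have hcosh_e := cosh_law s r m e hs0 hr0 hm1 hm2 he0 he2
      obtain ⟨hcX, hsX⟩ := cosh_sinh_artanh hX0.le hX1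
      obtain ⟨hcY, hsY⟩ := cosh_sinh_artanh hY0.le hY1
      have hX2lt : X ^ 2 < 1 := by
        calc X ^ 2 = X * X := sq X
          _ < 1 * 1 := mul_lt_mul'' hX1 hX1 hX0.le hX0.le
          _ = 1 := one_mul 1
      have hY2lt : Y ^ 2 < 1 := by
        calc Y ^ 2 = Y * Y := sq Y
          _ < 1 * 1 := mul_lt_mul'' hY1 hY1 hY0.le hY0.le
          _ = 1 := one_mul 1
      have hPU : (0:ℝ) < 1 - X ^ 2 := by linarith only [hX2lt]
      have hPV : (0:ℝ) < 1 - Y ^ 2 := by linarith only [hY2lt]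
      have hsPU : 0 < Real.sqrt (1 - X ^ 2) := Real.sqrt_pos.2 hPU
      have hsPV : 0 < Real.sqrt (1 - Y ^ 2) := Real.sqrt_pos.2 hPV
      have chain1 : Real.cosh s * Real.cosh r - Real.sinh s * Real.sinh r * m
          = (1 - c * p) / (Real.sqrt (1 - X ^ 2) * Real.sqrt (1 - Y ^ 2)) := by
        rw [hsdef, hrdef, hcX, hcY, hsX, hsY, hmdef]
        field_simp
        linear_combination (-p) * hXY
      have hQ := mobius_norm_sq c hc u v hu hv
      rw [← hp] at hQ
      set D := 1 - 2 * c * p + c ^ 2 * ‖u‖ ^ 2 * ‖v‖ ^ 2 with hDdef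
      have hD0 : 0 < D := by
        rw [hDdef]
        exact D_pos c p ‖u‖ ‖v‖ hc (abs_le.1 hple).2 hu hv
      have hP : (1 - X ^ 2) * (1 - Y ^ 2) = D - c * ‖u - v‖ ^ 2 := by
        rw [hX2, hY2, hDdef, norm_sub_sq_real, ← hp]
        ring
      set t := Real.sqrt c * ‖mobiusAdd c (-u) v‖ with htdef
      have ht0 : 0 ≤ t := by positivity
      have ht2 : t ^ 2 * D = c * ‖u - v‖ ^ 2 := by
        rw [htdef, mul_pow, hsc2]
        linear_combination c * hQ
      clear_value t D
      have hQ0 : 0 ≤ c * ‖u - v‖ ^ 2 := by positivity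
      have hPprod : 0 < (1 - X ^ 2) * (1 - Y ^ 2) := mul_pos hPU hPV
      have ht2lt : t ^ 2 < 1 := by
        have h4 : t ^ 2 * D < 1 * D := by
          rw [ht2, one_mul]; linarith only [hP, hPprod]
        exact lt_of_mul_lt_mul_right h4 hD0.le
      have ht1 : t < 1 := by
        have h5 := Real.sqrt_lt_sqrt (sq_nonneg t) ht2lt
        rwa [Real.sqrt_sq ht0, Real.sqrt_one] at h5
      have h1t2 : 0 < 1 - t ^ 2 := by linarith only [ht2lt]
      have hsqD : 0 < Real.sqrt D := Real.sqrt_pos.2 hD0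
      have h1t2' : Real.sqrt (1 - t ^ 2)
          = Real.sqrt (1 - X ^ 2) * Real.sqrt (1 - Y ^ 2) / Real.sqrt D := by
        rw [← Real.sqrt_mul hPU.le, ← Real.sqrt_div (mul_nonneg hPU.le hPV.le)]
        congr 1
        rw [hP]
        field_simp
        linear_combination -ht2
      obtain ⟨hct, -⟩ := cosh_sinh_artanh ht0 ht1
      have hcp : (1 - c * p) ≤ Real.sqrt D := by
        have h2 : (1 - c * p) ^ 2 ≤ D := by
          rw [hDdef]
          exact one_sub_cp_sq_le c p ‖u‖ ‖v‖ hc hcs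
        calc 1 - c * p ≤ |1 - c * p| := le_abs_self _
          _ = Real.sqrt ((1 - c * p) ^ 2) := (Real.sqrt_sq_eq_abs _).symm
          _ ≤ Real.sqrt D := Real.sqrt_le_sqrt h2
      have chain2 : (1 - c * p) / (Real.sqrt (1 - X ^ 2) * Real.sqrt (1 - Y ^ 2))
          ≤ Real.cosh (_root_.artanh t) := by
        rw [hct, h1t2', one_div_div]
        exact (div_le_div_iff_of_pos_right (mul_pos hsPU hsPV)).2 hcp
      have hfinal : Real.cosh e ≤ Real.cosh (_root_.artanh t) :=
        (hcosh_e.trans_eq chain1).trans chain2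
      have heart : e ≤ _root_.artanh t := by
        have h' := Real.cosh_le_cosh.1 hfinal
        rwa [abs_of_nonneg he0, abs_of_nonneg (artanh_nonneg ht0 ht1)] at h'
      rw [pdist, ← htdef]
      have hab : ‖a - b‖ = e / Real.sqrt c := by
        rw [hedef]
        field_simp
      rw [hab]
      calc e / Real.sqrt c ≤ _root_.artanh t / Real.sqrt c :=
            (div_le_div_iff_of_pos_right hsc).2 heart
        _ = 1 / Real.sqrt c * _root_.artanh t := by ring
end

section
/- Let n ∈ ℕ, c > 0, and let a, b ∈ ℝⁿ be unit vectors. Define the hyperbolic inner product D(u,v) = ½·(d(0,u)² + d(0,v)² − d(u,v)²), where d is the rescaled Poincaré distance. Then D(r·a, r·b)/r² tends to ⟨a,b⟩ as r tends to 0 from the right; that is, near the origin of the Poincaré ball the proposed hyperbolic inner product agrees with the Euclidean inner product to leading order. -/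
open Real
open scoped Classical

/-- The hyperbolic inner product `D(u,v) = ½(d(0,u)² + d(0,v)² − d(u,v)²)`. -/
noncomputable def phyperInner {n : ℕ} (c : ℝ) (u v : EuclideanSpace ℝ (Fin n)) : ℝ :=
  (1 / 2) * (pdist c 0 u ^ 2 + pdist c 0 v ^ 2 - pdist c u v ^ 2)

lemma artanh_zero : _root_.artanh 0 = 0 := by simp [_root_.artanh]

lemma hasDerivAt_artanh : HasDerivAt _root_.artanh 1 0 := by
  have h1 : HasDerivAt (fun x : ℝ => 1 + x) 1 0 := by
    simpa using (hasDerivAt_id (0:ℝ)).const_add 1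
  have h2 : HasDerivAt (fun x : ℝ => 1 - x) (-1) 0 := by
    simpa using (hasDerivAt_id (0:ℝ)).const_sub 1
  have hd : HasDerivAt (fun x : ℝ => (1 + x) / (1 - x)) 2 0 := by
    have := h1.div h2 (by norm_num)
    norm_num at this
    exact this
  have hl : HasDerivAt (fun x : ℝ => Real.log ((1 + x) / (1 - x))) 2 0 := by
    have := hd.log (by norm_num)
    norm_num at this
    exact this
  have := hl.const_mul (1/2 : ℝ)
  norm_num at this
  exact this

noncomputable def Fa (x : ℝ) : ℝ := if x = 0 then 1 else _root_.artanh x / x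

lemma artanh_eq_Fa (x : ℝ) : _root_.artanh x = Fa x * x := by
  by_cases h : x = 0
  · simp [h, _root_.artanh_zero, Fa]
  · rw [Fa, if_neg h, div_mul_cancel₀ _ h]

lemma tendsto_Fa : Filter.Tendsto Fa (nhds 0) (nhds 1) := by
  have hs := hasDerivAt_iff_tendsto_slope.mp _root_.hasDerivAt_artanh
  have h1 : Filter.Tendsto Fa (nhdsWithin 0 {(0:ℝ)}ᶜ) (nhds 1) := by
    refine hs.congr' ?_
    filter_upwards [self_mem_nhdsWithin] with x hx
    simp only [slope, Fa, _root_.artanh_zero, vsub_eq_sub, sub_zero, Set.mem_compl_iff,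
      Set.mem_singleton_iff] at hx ⊢
    rw [if_neg hx]; field_simp
    rw [smul_eq_mul, ← mul_assoc, mul_one_div_cancel hx, one_mul]
  rw [← nhdsNE_sup_pure (0:ℝ), Filter.tendsto_sup]
  refine ⟨h1, ?_⟩
  have h0 : Fa 0 = 1 := by simp [Fa]
  simpa [h0] using tendsto_pure_nhds Fa 0

lemma mobiusAdd_zero_left {n : ℕ} (c : ℝ) (v : EuclideanSpace ℝ (Fin n)) :
    mobiusAdd c 0 v = v := by
  simp [mobiusAdd]

lemma mobius_smul {n : ℕ} (c r : ℝ) (hr : 0 < r) (a b : EuclideanSpace ℝ (Fin n))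
    (ha : ‖a‖ = 1) (hb : ‖b‖ = 1) :
    mobiusAdd c (-(r • a)) (r • b) =
      r • ((1 - 2 * c * r ^ 2 * (inner ℝ a b : ℝ) + c ^ 2 * r ^ 4)⁻¹ •
        ((-(1 - 2 * c * r ^ 2 * (inner ℝ a b : ℝ) + c * r ^ 2)) • a + (1 - c * r ^ 2) • b)) := by
  have h1 : (inner ℝ (-(r • a)) (r • b) : ℝ) = -(r ^ 2 * (inner ℝ a b : ℝ)) := by
    rw [inner_neg_left, real_inner_smul_left, real_inner_smul_right]
    ring
  have h2 : ‖-(r • a)‖ = r := by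
    rw [norm_neg, norm_smul, Real.norm_eq_abs, abs_of_pos hr, ha, mul_one]
  have h3 : ‖r • b‖ = r := by
    rw [norm_smul, Real.norm_eq_abs, abs_of_pos hr, hb, mul_one]
  rw [mobiusAdd, h1, h2, h3]
  have e1 : (1 + 2 * c * (-(r ^ 2 * (inner ℝ a b : ℝ))) + c ^ 2 * r ^ 2 * r ^ 2)
      = 1 - 2 * c * r ^ 2 * (inner ℝ a b : ℝ) + c ^ 2 * r ^ 4 := by ring
  have e2 : (1 + 2 * c * (-(r ^ 2 * (inner ℝ a b : ℝ))) + c * r ^ 2)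
      = 1 - 2 * c * r ^ 2 * (inner ℝ a b : ℝ) + c * r ^ 2 := by ring
  rw [e1, e2]
  module


/-- Near the origin the hyperbolic inner product agrees with the Euclidean one to
leading order: `D(r·a, r·b)/r² → ⟨a,b⟩` as `r → 0⁺` for unit vectors `a, b`. -/
theorem phyperInner_tendsto_inner {n : ℕ} (c : ℝ) (hc : 0 < c)
    (a b : EuclideanSpace ℝ (Fin n)) (ha : ‖a‖ = 1) (hb : ‖b‖ = 1) :
    Filter.Tendsto (fun r : ℝ => phyperInner c (r • a) (r • b) / r ^ 2)
      (nhdsWithin 0 (Set.Ioi 0)) (nhds (inner ℝ a b : ℝ)) := by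
  set sc := Real.sqrt c with hscdef
  have hsc : 0 < sc := Real.sqrt_pos.mpr hc
  set I : ℝ := (inner ℝ a b : ℝ) with hI
  set p : ℝ → ℝ := fun r => 1 - 2 * c * r ^ 2 * I + c ^ 2 * r ^ 4 with hp
  set V : ℝ → EuclideanSpace ℝ (Fin n) :=
    fun r => (-(1 - 2 * c * r ^ 2 * I + c * r ^ 2)) • a + (1 - c * r ^ 2) • b with hV
  set w : ℝ → EuclideanSpace ℝ (Fin n) := fun r => (p r)⁻¹ • V r with hw
  set G : ℝ → ℝ := fun r => (1/2) * ((Fa (sc * r)) ^ 2 + (Fa (sc * r)) ^ 2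
      - (Fa (sc * (r * ‖w r‖)) * ‖w r‖) ^ 2) with hG
  -- eventual equality
  have heq : ∀ r ∈ Set.Ioi (0:ℝ), phyperInner c (r • a) (r • b) / r ^ 2 = G r := by
    intro r hr
    have hr' : (0:ℝ) < r := hr
    have hrne : r ≠ 0 := ne_of_gt hr'
    have hna : ‖r • a‖ = r := by
      rw [norm_smul, Real.norm_eq_abs, abs_of_pos hr', ha, mul_one]
    have hnb : ‖r • b‖ = r := by
      rw [norm_smul, Real.norm_eq_abs, abs_of_pos hr', hb, mul_one]
    have hd1 : pdist c 0 (r • a) = Fa (sc * r) * r := by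
      rw [pdist, neg_zero, mobiusAdd_zero_left, hna, ← hscdef, artanh_eq_Fa]
      field_simp
    have hd2 : pdist c 0 (r • b) = Fa (sc * r) * r := by
      rw [pdist, neg_zero, mobiusAdd_zero_left, hnb, ← hscdef, artanh_eq_Fa]
      field_simp
    have hd3 : pdist c (r • a) (r • b) = Fa (sc * (r * ‖w r‖)) * (r * ‖w r‖) := by
      rw [pdist, mobius_smul c r hr' a b ha hb, ← hscdef]
      rw [norm_smul, Real.norm_eq_abs, abs_of_pos hr']
      rw [show r * ‖(1 - 2 * c * r ^ 2 * I + c ^ 2 * r ^ 4)⁻¹ •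
        ((-(1 - 2 * c * r ^ 2 * I + c * r ^ 2)) • a + (1 - c * r ^ 2) • b)‖ = r * ‖w r‖ from rfl]
      rw [artanh_eq_Fa]
      field_simp
    rw [phyperInner, hd1, hd2, hd3, hG]
    field_simp
  -- limits
  have hl0 : Filter.Tendsto (fun r : ℝ => r) (nhdsWithin 0 (Set.Ioi 0)) (nhds 0) :=
    Filter.tendsto_id.mono_left nhdsWithin_le_nhds
  have t1 : Filter.Tendsto (fun r : ℝ => sc * r) (nhdsWithin 0 (Set.Ioi 0)) (nhds 0) := by
    simpa using hl0.const_mul sc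
  have tFa1 : Filter.Tendsto (fun r : ℝ => Fa (sc * r)) (nhdsWithin 0 (Set.Ioi 0)) (nhds 1) :=
    tendsto_Fa.comp t1
  have hpc : Continuous p := by fun_prop
  have hVc : Continuous V := by
    apply Continuous.add
    · exact (by fun_prop : Continuous fun r : ℝ => (-(1 - 2 * c * r ^ 2 * I + c * r ^ 2))).smul
        continuous_const
    · exact (by fun_prop : Continuous fun r : ℝ => (1 - c * r ^ 2)).smul continuous_const
  have hp0 : p 0 ≠ 0 := by norm_num [hp]
  have hwc : ContinuousAt w 0 := ((hpc.continuousAt).inv₀ hp0).smul hVc.continuousAt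
  have hw0 : ‖w 0‖ = ‖b - a‖ := by
    have : w 0 = b - a := by
      simp only [hw, hp, hV]
      norm_num
      module
    rw [this]
  have tw : Filter.Tendsto (fun r : ℝ => ‖w r‖) (nhdsWithin 0 (Set.Ioi 0)) (nhds ‖b - a‖) := by
    rw [← hw0]
    exact ((continuous_norm.continuousAt.comp hwc).tendsto.mono_left nhdsWithin_le_nhds)
  have t2 : Filter.Tendsto (fun r : ℝ => sc * (r * ‖w r‖)) (nhdsWithin 0 (Set.Ioi 0)) (nhds 0) := by
    have := (hl0.mul tw).const_mul sc
    simpa using this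
  have tFa2 : Filter.Tendsto (fun r : ℝ => Fa (sc * (r * ‖w r‖)))
      (nhdsWithin 0 (Set.Ioi 0)) (nhds 1) := tendsto_Fa.comp t2
  have tG : Filter.Tendsto G (nhdsWithin 0 (Set.Ioi 0))
      (nhds ((1/2) * ((1:ℝ) ^ 2 + 1 ^ 2 - (1 * ‖b - a‖) ^ 2))) := by
    exact (((tFa1.pow 2).add (tFa1.pow 2)).sub ((tFa2.mul tw).pow 2)).const_mul (1/2)
  have hval : (1/2 : ℝ) * ((1:ℝ) ^ 2 + 1 ^ 2 - (1 * ‖b - a‖) ^ 2) = I := by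
    have hns : ‖b - a‖ ^ 2 = ‖b‖ ^ 2 - 2 * (inner ℝ b a : ℝ) + ‖a‖ ^ 2 := norm_sub_sq_real b a
    have hc2 : (inner ℝ b a : ℝ) = I := by rw [hI]; exact real_inner_comm a b
    rw [one_mul, hns, ha, hb, hc2]
    ring
  rw [hval] at tG
  refine tG.congr' ?_
  filter_upwards [self_mem_nhdsWithin] with r hr
  exact (heq r hr).symm
end
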